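/- arXiv:1902.00431 — 3 statements merged into one kernel-verified Lean document; each statement's English description precedes it below -/
import Mathlib

section
/- Let P* be a PABM probability matrix on n nodes with K* communities, true assignment z* and popularity vectors Λ^{(k,l)}, and suppose Assumption A1* holds: for every k ∈ {1,…,K*}, the vectors Λ^{(k,1)}, …, Λ^{(k,K*)} are linearly independent. Then rank(P*) = K*²; in particular, for each community l the columns of P* with indices in {j : z*(j)=l} span a subspace S_l of dimension exactly K*, and these subspaces are independent: dim(S_1 + ⋯ + S_{K*}) = Σ_{l=1}^{K*} dim(S_l) = K*². -/
open MeasureTheory Matrix ProbabilityTheory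

noncomputable def frobSq {m n : Type*} [Fintype m] [Fintype n] (B : Matrix m n ℝ) : ℝ :=
  ∑ i, ∑ j, B i j ^ 2

noncomputable def opNormSq {m n : Type*} [Fintype m] [Fintype n] (B : Matrix m n ℝ) : ℝ :=
  sSup {t : ℝ | ∃ v : n → ℝ, (∑ j, v j ^ 2) = 1 ∧ t = ∑ i, (∑ j, B i j * v j) ^ 2}

noncomputable def opNorm {m n : Type*} [Fintype m] [Fintype n] (B : Matrix m n ℝ) : ℝ :=
  Real.sqrt (opNormSq B)

/-- The `(k,l)` block of a matrix `B` under the community assignment `z`. -/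
def Mblock {n K : ℕ} (B : Matrix (Fin n) (Fin n) ℝ) (z : Fin n → Fin K) (k l : Fin K) :
    Matrix {i : Fin n // z i = k} {j : Fin n // z j = l} ℝ :=
  Matrix.of fun i j => B i.1 j.1

/-- `P` is a Popularity Adjusted Block Model probability matrix with assignment `z`
and popularity matrix `V`. -/
def IsPABM {n K : ℕ} (P : Matrix (Fin n) (Fin n) ℝ) (z : Fin n → Fin K)
    (V : Matrix (Fin n) (Fin K) ℝ) : Prop :=
  (∀ i k, V i k ∈ Set.Icc (0 : ℝ) 1) ∧ ∀ i j, P i j = V i (z j) * V j (z i)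

/-- `A` is a random symmetric adjacency matrix with independent Bernoulli entries
with means `P` on the (closed) upper triangle. -/
def IsBernoulliAdjacency {n : ℕ} {Ω : Type*} [MeasurableSpace Ω] (μ : Measure Ω)
    (P : Matrix (Fin n) (Fin n) ℝ) (A : Ω → Matrix (Fin n) (Fin n) ℝ) : Prop :=
  (∀ i j, Measurable fun ω => A ω i j) ∧
  (∀ ω i j, A ω i j = 0 ∨ A ω i j = 1) ∧
  (∀ ω i j, A ω i j = A ω j i) ∧
  (∀ i j, μ {ω | A ω i j = 1} = ENNReal.ofReal (P i j)) ∧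
  iIndepFun
    (fun (p : {p : Fin n × Fin n // p.1 ≤ p.2}) ω => A ω p.1.1 p.1.2) μ

/-- `A` is a random matrix with mutually independent Bernoulli entries with means `P`. -/
def IsBernoulliMatrix {N M : ℕ} {Ω : Type*} [MeasurableSpace Ω] (μ : Measure Ω)
    (P : Matrix (Fin N) (Fin M) ℝ) (A : Ω → Matrix (Fin N) (Fin M) ℝ) : Prop :=
  (∀ i j, Measurable fun ω => A ω i j) ∧
  (∀ ω i j, A ω i j = 0 ∨ A ω i j = 1) ∧
  (∀ i j, μ {ω | A ω i j = 1} = ENNReal.ofReal (P i j)) ∧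
  iIndepFun (fun (p : Fin N × Fin M) ω => A ω p.1 p.2) μ

/-- `R` is a best rank-one approximation of `B` in Frobenius norm. -/
def IsRankOneApprox {m n : Type*} [Fintype m] [Fintype n] (B R : Matrix m n ℝ) : Prop :=
  R.rank ≤ 1 ∧ ∀ X : Matrix m n ℝ, X.rank ≤ 1 → frobSq (B - R) ≤ frobSq (B - X)

/-- Proportion of misclassified nodes (up to relabeling of communities). -/
noncomputable def errRate {n K : ℕ} (Z zstar : Fin n → Fin K) : ℝ :=
  ((sInf {m : ℕ | ∃ π : Equiv.Perm (Fin K),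
      m = (Finset.univ.filter fun i => π (Z i) ≠ zstar i).card} : ℕ) : ℝ) / (n : ℝ)

/-- The penalty `Pen(n,K)` with constants `H1, H2, H3`. -/
noncomputable def Pen (H1 H2 H3 : ℝ) (n K : ℕ) : ℝ :=
  H1 * n * K + H2 * K ^ 2 * Real.log n + H3 * n * Real.log K

/-- `Phat` is assembled from a minimizer of the penalized least-squares criterion over
the number of communities `K`, assignments `z`, and rank-one blocks `Θ`. -/
def IsPenalizedMin (n : ℕ) (Pen' : ℕ → ℝ) (A Phat : Matrix (Fin n) (Fin n) ℝ) : Prop :=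
  ∃ (K : ℕ) (_ : 1 ≤ K) (_ : K ≤ n) (z : Fin n → Fin K)
    (Θ : ∀ k l : Fin K, Matrix {i : Fin n // z i = k} {j : Fin n // z j = l} ℝ),
    (∀ k l, (Θ k l).rank = 1) ∧
    (∀ i j, Phat i j = Θ (z i) (z j) ⟨i, rfl⟩ ⟨j, rfl⟩) ∧
    (∀ (K' : ℕ), 1 ≤ K' → K' ≤ n → ∀ (z' : Fin n → Fin K')
      (Θ' : ∀ k l : Fin K', Matrix {i : Fin n // z' i = k} {j : Fin n // z' j = l} ℝ),
      (∀ k l, (Θ' k l).rank = 1) →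
      (∑ k, ∑ l, frobSq (Mblock A z k l - Θ k l)) + Pen' K ≤
      (∑ k, ∑ l, frobSq (Mblock A z' k l - Θ' k l)) + Pen' K')

section Aux

variable {n Kstar : ℕ}

/-- Block-supported popularity vector: supported on community `p.1`, entries `V · p.2`. -/
noncomputable def ublock (zstar : Fin n → Fin Kstar) (V : Matrix (Fin n) (Fin Kstar) ℝ)
    (p : Fin Kstar × Fin Kstar) : Fin n → ℝ :=
  fun i => if zstar i = p.1 then V i p.2 else 0

lemma ublock_indep (zstar : Fin n → Fin Kstar) (V : Matrix (Fin n) (Fin Kstar) ℝ)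
    (hA1star : ∀ k : Fin Kstar,
      LinearIndependent ℝ
        (fun l : Fin Kstar => fun i : {i : Fin n // zstar i = k} => V i.1 l)) :
    LinearIndependent ℝ (ublock zstar V) := by
  rw [Fintype.linearIndependent_iff]
  intro c hc p
  obtain ⟨k, l⟩ := p
  refine (Fintype.linearIndependent_iff.mp (hA1star k)) (fun l => c (k, l)) ?_ l
  funext i
  have h := congrFun hc i.1
  simp only [Finset.sum_apply, Pi.smul_apply, smul_eq_mul, ublock, Pi.zero_apply] at h ⊢
  rw [Fintype.sum_prod_type] at h
  simp only [i.2, mul_ite, mul_zero] at h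
  simpa using h

end Aux

section Aux2

variable {n Kstar : ℕ}

lemma col_eq (zstar : Fin n → Fin Kstar) (V : Matrix (Fin n) (Fin Kstar) ℝ)
    (Pstar : Matrix (Fin n) (Fin n) ℝ)
    (hP : ∀ i j, Pstar i j = V i (zstar j) * V j (zstar i)) (j : Fin n) :
    (fun i => Pstar i j) = ∑ k, V j k • ublock zstar V (k, zstar j) := by
  funext i
  simp only [Finset.sum_apply, Pi.smul_apply, smul_eq_mul, ublock, mul_ite, mul_zero,
    hP i j, Finset.sum_ite_eq Finset.univ (zstar i), Finset.mem_univ, if_true]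
  ring

lemma row_span_top (zstar : Fin n → Fin Kstar) (V : Matrix (Fin n) (Fin Kstar) ℝ) (l : Fin Kstar)
    (h : LinearIndependent ℝ
        (fun k : Fin Kstar => fun i : {i : Fin n // zstar i = l} => V i.1 k)) :
    ∀ k : Fin Kstar, ∃ a : {j : Fin n // zstar j = l} → ℝ,
      ∀ k', (∑ j, a j * V j.1 k') = if k' = k then 1 else 0 := by
  set M : Matrix {j : Fin n // zstar j = l} (Fin Kstar) ℝ := Matrix.of fun j k => V j.1 k with hM
  have hinj : Function.Injective M.mulVec := by
    rw [Matrix.mulVec_injective_iff]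
    exact h
  have hrange : LinearMap.range M.vecMulLinear = LinearMap.range Mᵀ.mulVecLin := by
    rw [range_vecMulLinear, Matrix.range_mulVecLin, show Mᵀ.col = M.row from rfl]
  have hfr : Module.finrank ℝ (LinearMap.range M.vecMulLinear) = Kstar := by
    rw [hrange]
    have : Mᵀ.rank = M.rank := Matrix.rank_transpose M
    have h2 : M.rank = Kstar := by
      rw [Matrix.rank, LinearMap.finrank_range_of_inj]
      · simp [Module.finrank_pi]
      · rwa [← Matrix.coe_mulVecLin] at hinj
    rw [← Matrix.rank, this, h2]
  have htop : LinearMap.range M.vecMulLinear = ⊤ := by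
    apply Submodule.eq_top_of_finrank_eq
    rw [hfr, Module.finrank_pi]
    simp
  intro k
  have : (Pi.single k 1 : Fin Kstar → ℝ) ∈ LinearMap.range M.vecMulLinear := htop ▸ Submodule.mem_top
  obtain ⟨a, ha⟩ := this
  refine ⟨a, fun k' => ?_⟩
  have := congrFun ha k'
  simp only [Matrix.vecMulLinear_apply, Matrix.vecMul, dotProduct] at this
  rw [show (∑ j, a j * V j.1 k') = ∑ j, a j * M j k' from rfl, this]
  simp [Pi.single_apply]

end Aux2

/-- Under Assumption A1*, the PABM probability matrix has rank `K*²`; the columns of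
each community span a `K*`-dimensional subspace and these subspaces are independent. -/
theorem pabm_rank_and_subspaces
    (n Kstar : ℕ) (zstar : Fin n → Fin Kstar) (V : Matrix (Fin n) (Fin Kstar) ℝ)
    (Pstar : Matrix (Fin n) (Fin n) ℝ) (hPABM : IsPABM Pstar zstar V)
    (hA1star : ∀ k : Fin Kstar,
      LinearIndependent ℝ
        (fun l : Fin Kstar => fun i : {i : Fin n // zstar i = k} => V i.1 l))
    (S : Fin Kstar → Submodule ℝ (Fin n → ℝ))
    (hS : ∀ l, S l =
      Submodule.span ℝ {c : Fin n → ℝ | ∃ j, zstar j = l ∧ c = fun i => Pstar i j}) :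
    Pstar.rank = Kstar ^ 2 ∧
    (∀ l : Fin Kstar, Module.finrank ℝ (S l) = Kstar) ∧
    Module.finrank ℝ (⨆ l : Fin Kstar, S l : Submodule ℝ (Fin n → ℝ)) =
      ∑ l : Fin Kstar, Module.finrank ℝ (S l) ∧
    Module.finrank ℝ (⨆ l : Fin Kstar, S l : Submodule ℝ (Fin n → ℝ)) = Kstar ^ 2 := by
  obtain ⟨hV, hP⟩ := hPABM
  set u := ublock zstar V with hu
  have hindep : LinearIndependent ℝ u := ublock_indep zstar V hA1star
  have hSeq : ∀ l, S l = Submodule.span ℝ (Set.range fun k => u (k, l)) := by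
    intro l
    rw [hS l]
    apply le_antisymm
    · rw [Submodule.span_le]
      rintro c ⟨j, hj, rfl⟩
      rw [col_eq zstar V Pstar hP j, hj]
      exact Submodule.sum_mem _ fun k _ => Submodule.smul_mem _ _
        (Submodule.subset_span ⟨k, rfl⟩)
    · rw [Submodule.span_le]
      rintro c ⟨k, rfl⟩
      obtain ⟨a, ha⟩ := row_span_top zstar V l (hA1star l) k
      have hmain : u (k, l) = ∑ j : {j : Fin n // zstar j = l},
          a j • (fun i => Pstar i j.1) := by
        funext i
        simp only [Finset.sum_apply, Pi.smul_apply, smul_eq_mul, hu, ublock]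
        have hcalc : ∀ j : {j : Fin n // zstar j = l}, a j * Pstar i j.1
            = V i l * (a j * V j.1 (zstar i)) := by
          intro j; rw [hP i j.1, j.2]; ring
        rw [Finset.sum_congr rfl fun j _ => hcalc j, ← Finset.mul_sum, ha (zstar i)]
        by_cases h : zstar i = k <;> simp [h]
      show u (k, l) ∈ _
      rw [hmain]
      exact Submodule.sum_mem _ fun j _ => Submodule.smul_mem _ _
        (Submodule.subset_span ⟨j.1, j.2, rfl⟩)
  have hfrS : ∀ l, Module.finrank ℝ (S l) = Kstar := by
    intro l
    have hi : LinearIndependent ℝ fun k => u (k, l) :=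
      hindep.comp (fun k => (k, l)) (fun a b hab => congrArg Prod.fst hab)
    rw [hSeq l, finrank_span_eq_card hi, Fintype.card_fin]
  have hsup : (⨆ l, S l : Submodule ℝ (Fin n → ℝ)) = Submodule.span ℝ (Set.range u) := by
    have hr : Set.range u = ⋃ l, Set.range fun k => u (k, l) := by
      ext c
      constructor
      · rintro ⟨⟨k, l⟩, rfl⟩
        exact Set.mem_iUnion.2 ⟨l, ⟨k, rfl⟩⟩
      · intro h
        obtain ⟨l, k, rfl⟩ := Set.mem_iUnion.1 h
        exact ⟨(k, l), rfl⟩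
    rw [hr, Submodule.span_iUnion]
    exact iSup_congr hSeq
  have hfrsup : Module.finrank ℝ (⨆ l, S l : Submodule ℝ (Fin n → ℝ)) = Kstar ^ 2 := by
    rw [hsup, finrank_span_eq_card hindep]
    simp [Fintype.card_prod, sq]
  refine ⟨?_, hfrS, ?_, hfrsup⟩
  · rw [Matrix.rank_eq_finrank_span_cols]
    have hcols : Submodule.span ℝ (Set.range Pstarᵀ) = ⨆ l, S l := by
      apply le_antisymm
      · rw [Submodule.span_le]
        rintro c ⟨j, rfl⟩
        have hj : Pstarᵀ j ∈ S (zstar j) := by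
          rw [hS]
          exact Submodule.subset_span ⟨j, rfl, by funext i; rfl⟩
        exact Submodule.mem_iSup_of_mem (zstar j) hj
      · apply iSup_le
        intro l
        rw [hS l]
        apply Submodule.span_le.2
        rintro c ⟨j, hj, rfl⟩
        exact Submodule.subset_span ⟨j, rfl⟩
    rw [show Pstar.col = Pstarᵀ from rfl, hcols, hfrsup]
  · rw [hfrsup]
    simp [hfrS, sq, Finset.sum_const, mul_comm]
end

section
/- Let P ∈ [0,1]^{n×n} and let Ξ = A − P where A is a random matrix with mutually independent entries A_{ij} ~ Bernoulli(P_{ij}). For every K ∈ {1,…,n} and every assignment Z : {1,…,n} → {1,…,K}, let H_{K,Z} ∈ ℝ^{n×n} be a fixed (deterministic) matrix with ‖H_{K,Z}‖_F = 1. Then for every t > 0, with probability at least 1 − 2e^{−t}, simultaneously for all K ∈ {1,…,n} and all assignments Z : {1,…,n} → {1,…,K}, one has ⟨Ξ, H_{K,Z}⟩² ≤ 2·ln n + 2·n·ln K + 2t, where ⟨X,Y⟩ = Tr(X^T·Y). -/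
open MeasureTheory Matrix ProbabilityTheory

lemma aux_exp_mul_le_cosh_add {c x : ℝ} (hx1 : -1 ≤ x) (hx2 : x ≤ 1) :
    Real.exp (c * x) ≤ Real.cosh c + x * Real.sinh c := by
  have h := convexOn_exp.2 (Set.mem_univ (-c)) (Set.mem_univ c)
      (show (0:ℝ) ≤ (1 - x) / 2 by linarith) (show (0:ℝ) ≤ (1 + x) / 2 by linarith)
      (show (1 - x) / 2 + (1 + x) / 2 = 1 by ring)
  simp only [smul_eq_mul] at h
  rw [show (1 - x) / 2 * (-c) + (1 + x) / 2 * c = c * x by ring] at h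
  rw [Real.cosh_eq, Real.sinh_eq]
  nlinarith [h]

lemma aux_bernoulli_mgf {Ω : Type} [MeasurableSpace Ω] (μ : Measure Ω) [IsProbabilityMeasure μ]
    (B : Ω → ℝ) (hBm : Measurable B) (hB01 : ∀ ω, B ω = 0 ∨ B ω = 1)
    (p : ℝ) (hp0 : 0 ≤ p) (hp1 : p ≤ 1) (hμ : μ {ω | B ω = 1} = ENNReal.ofReal p)
    (c : ℝ) :
    Integrable (fun ω => Real.exp (c * (B ω - p))) μ ∧
    ∫ ω, Real.exp (c * (B ω - p)) ∂μ ≤ Real.exp (c ^ 2 / 2) := by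
  have hs : MeasurableSet {ω | B ω = 1} := hBm (measurableSet_singleton 1)
  have hBind : B = Set.indicator {ω | B ω = 1} (fun _ => (1 : ℝ)) := by
    funext ω
    rcases hB01 ω with h0 | h1
    · rw [Set.indicator_of_notMem (by simp [Set.mem_setOf_eq, h0]) _, h0]
    · rw [Set.indicator_of_mem (by simpa [Set.mem_setOf_eq] using h1) _, h1]
  have hBint : Integrable B μ := by
    rw [hBind]; exact (integrable_const (1 : ℝ)).indicator hs
  have hBavg : ∫ ω, B ω ∂μ = p := by
    rw [show (fun ω => B ω) = B from rfl, hBind, integral_indicator_const _ hs, measureReal_def, hμ,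
      ENNReal.toReal_ofReal hp0, smul_eq_mul, mul_one]
  have hfun : (fun ω => Real.exp (c * (B ω - p)))
      = fun ω => Real.exp (-(c * p)) + (Real.exp (-(c * p)) * (Real.exp c - 1)) * B ω := by
    funext ω
    rcases hB01 ω with h0 | h1
    · rw [h0, show c * ((0:ℝ) - p) = -(c * p) by ring]; ring
    · rw [h1, show c * (1 - p) = c + -(c * p) by ring, Real.exp_add]; ring
  constructor
  · rw [hfun]
    exact (integrable_const _).add (hBint.const_mul _)
  · rw [hfun]
    rw [integral_add (integrable_const _) (hBint.const_mul _), integral_const,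
      integral_const_mul, hBavg, probReal_univ, smul_eq_mul, one_mul]
    have h1 : Real.exp (-(c * p)) + Real.exp (-(c * p)) * (Real.exp c - 1) * p
        = (1 - p) * Real.exp (c * (-p)) + p * Real.exp (c * (1 - p)) := by
      rw [show c * (1 - p) = c + -(c * p) by ring, Real.exp_add,
        show c * (-p) = -(c * p) by ring]
      ring
    rw [h1]
    have h2 := aux_exp_mul_le_cosh_add (c := c) (x := -p) (by linarith) (by linarith)
    have h3 := aux_exp_mul_le_cosh_add (c := c) (x := 1 - p) (by linarith) (by linarith)
    have h4 : (1 - p) * Real.exp (c * (-p)) + p * Real.exp (c * (1 - p)) ≤ Real.cosh c := by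
      nlinarith [h2, h3]
    exact h4.trans (Real.cosh_le_exp_half_sq c)

lemma aux_pair_tail {n : ℕ} {Ω : Type} [MeasurableSpace Ω] (μ : Measure Ω) [IsProbabilityMeasure μ]
    (P : Matrix (Fin n) (Fin n) ℝ) (hP : ∀ i j, P i j ∈ Set.Icc (0:ℝ) 1)
    (A : Ω → Matrix (Fin n) (Fin n) ℝ)
    (hAm : ∀ i j, Measurable fun ω => A ω i j)
    (hA01 : ∀ ω i j, A ω i j = 0 ∨ A ω i j = 1)
    (hAμ : ∀ i j, μ {ω | A ω i j = 1} = ENNReal.ofReal (P i j))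
    (hInd : iIndepFun (fun (p : Fin n × Fin n) ω => A ω p.1 p.2) μ)
    (h : Matrix (Fin n) (Fin n) ℝ) (hh : (∑ i, ∑ j, h i j ^ 2) = 1)
    (a : ℝ) (ha : 0 ≤ a) :
    μ {ω | ¬ Matrix.trace ((A ω - P)ᵀ * h) ^ 2 ≤ a ^ 2}
      ≤ ENNReal.ofReal (2 * Real.exp (-(a ^ 2) / 2)) := by
  set Y : Fin n × Fin n → Ω → ℝ := fun p ω => (A ω p.1 p.2 - P p.1 p.2) * h p.1 p.2 with hY
  have hYm : ∀ p, Measurable (Y p) :=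
    fun p => ((hAm _ _).sub measurable_const).mul measurable_const
  have hYind : iIndepFun Y μ := by
    have := hInd.comp (fun p x => (x - P p.1 p.2) * h p.1 p.2)
      (fun p => (measurable_id.sub measurable_const).mul measurable_const)
    exact this
  have htr : ∀ ω, Matrix.trace ((A ω - P)ᵀ * h) = (∑ p : Fin n × Fin n, Y p) ω := by
    intro ω
    simp only [Matrix.trace, Matrix.diag, Matrix.mul_apply, Matrix.transpose_apply,
      Matrix.sub_apply, Finset.sum_apply, hY, Fintype.sum_prod_type]
    exact Finset.sum_comm
  -- per-entry mgf facts
  have hent : ∀ (s : ℝ) (p : Fin n × Fin n),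
      Integrable (fun ω => Real.exp (s * Y p ω)) μ ∧
      mgf (Y p) μ s ≤ Real.exp (s ^ 2 * h p.1 p.2 ^ 2 / 2) := by
    intro s p
    have hb := aux_bernoulli_mgf μ (fun ω => A ω p.1 p.2) (hAm _ _) (fun ω => hA01 ω _ _)
      (P p.1 p.2) (hP _ _).1 (hP _ _).2 (hAμ _ _) (s * h p.1 p.2)
    have hfe : (fun ω => Real.exp (s * Y p ω))
        = fun ω => Real.exp ((s * h p.1 p.2) * (A ω p.1 p.2 - P p.1 p.2)) := by
      funext ω; congr 1; simp only [hY]; ring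
    refine ⟨hfe ▸ hb.1, ?_⟩
    have : mgf (Y p) μ s = ∫ ω, Real.exp ((s * h p.1 p.2) * (A ω p.1 p.2 - P p.1 p.2)) ∂μ := by
      rw [mgf, ← hfe]
    rw [this]
    refine hb.2.trans ?_
    rw [show (s * h p.1 p.2) ^ 2 / 2 = s ^ 2 * h p.1 p.2 ^ 2 / 2 by ring]
  have hSint : ∀ s : ℝ, Integrable (fun ω => Real.exp (s * (∑ p : Fin n × Fin n, Y p) ω)) μ :=
    fun s => hYind.integrable_exp_mul_sum hYm (fun p _ => (hent s p).1)
  have hmgf : ∀ s : ℝ, mgf (∑ p : Fin n × Fin n, Y p) μ s ≤ Real.exp (s ^ 2 / 2) := by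
    intro s
    rw [hYind.mgf_sum hYm]
    calc ∏ p : Fin n × Fin n, mgf (Y p) μ s
        ≤ ∏ p : Fin n × Fin n, Real.exp (s ^ 2 * h p.1 p.2 ^ 2 / 2) :=
          Finset.prod_le_prod (fun p _ => mgf_nonneg) (fun p _ => (hent s p).2)
      _ = Real.exp (∑ p : Fin n × Fin n, s ^ 2 * h p.1 p.2 ^ 2 / 2) := (Real.exp_sum _ _).symm
      _ = Real.exp (s ^ 2 / 2) := by
          congr 1
          have : ∑ p : Fin n × Fin n, s ^ 2 * h p.1 p.2 ^ 2 / 2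
              = s ^ 2 / 2 * ∑ p : Fin n × Fin n, h p.1 p.2 ^ 2 := by
            rw [Finset.mul_sum]; exact Finset.sum_congr rfl fun p _ => by ring
          rw [this, Fintype.sum_prod_type, hh, mul_one]
  have hup : (μ {ω | a ≤ (∑ p : Fin n × Fin n, Y p) ω}).toReal ≤ Real.exp (-(a ^ 2) / 2) := by
    refine (measure_ge_le_exp_mul_mgf a ha (hSint a)).trans ?_
    calc Real.exp (-a * a) * mgf (∑ p : Fin n × Fin n, Y p) μ a
        ≤ Real.exp (-a * a) * Real.exp (a ^ 2 / 2) := by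
          exact mul_le_mul_of_nonneg_left (hmgf a) (Real.exp_nonneg _)
      _ = Real.exp (-(a ^ 2) / 2) := by rw [← Real.exp_add]; congr 1; ring
  have hlow : (μ {ω | (∑ p : Fin n × Fin n, Y p) ω ≤ -a}).toReal ≤ Real.exp (-(a ^ 2) / 2) := by
    refine (measure_le_le_exp_mul_mgf (-a) (neg_nonpos.2 ha) (hSint (-a))).trans ?_
    calc Real.exp (-(-a) * (-a)) * mgf (∑ p : Fin n × Fin n, Y p) μ (-a)
        ≤ Real.exp (-(-a) * (-a)) * Real.exp ((-a) ^ 2 / 2) := by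
          exact mul_le_mul_of_nonneg_left (hmgf (-a)) (Real.exp_nonneg _)
      _ = Real.exp (-(a ^ 2) / 2) := by rw [← Real.exp_add]; congr 1; ring
  have hsub : {ω | ¬ Matrix.trace ((A ω - P)ᵀ * h) ^ 2 ≤ a ^ 2} ⊆
      {ω | a ≤ (∑ p : Fin n × Fin n, Y p) ω} ∪ {ω | (∑ p : Fin n × Fin n, Y p) ω ≤ -a} := by
    intro ω hω
    simp only [Set.mem_setOf_eq, not_le] at hω
    rw [htr ω] at hω
    set S := (∑ p : Fin n × Fin n, Y p) ω with hS
    have habs : a < |S| := by nlinarith [sq_abs S, abs_nonneg S]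
    rcases abs_cases S with ⟨he, _⟩ | ⟨he, _⟩
    · exact Or.inl (le_of_lt (he ▸ habs))
    · exact Or.inr (by simp only [Set.mem_setOf_eq]; linarith [he ▸ habs])
  calc μ {ω | ¬ Matrix.trace ((A ω - P)ᵀ * h) ^ 2 ≤ a ^ 2}
      ≤ μ ({ω | a ≤ (∑ p : Fin n × Fin n, Y p) ω}
          ∪ {ω | (∑ p : Fin n × Fin n, Y p) ω ≤ -a}) := measure_mono hsub
    _ ≤ μ {ω | a ≤ (∑ p : Fin n × Fin n, Y p) ω}
          + μ {ω | (∑ p : Fin n × Fin n, Y p) ω ≤ -a} := measure_union_le _ _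
    _ ≤ ENNReal.ofReal (Real.exp (-(a ^ 2) / 2)) + ENNReal.ofReal (Real.exp (-(a ^ 2) / 2)) := by
        refine add_le_add ?_ ?_
        · rw [← ENNReal.ofReal_toReal (measure_ne_top μ _)]
          exact ENNReal.ofReal_le_ofReal hup
        · rw [← ENNReal.ofReal_toReal (measure_ne_top μ _)]
          exact ENNReal.ofReal_le_ofReal hlow
    _ = ENNReal.ofReal (2 * Real.exp (-(a ^ 2) / 2)) := by
        rw [← ENNReal.ofReal_add (Real.exp_nonneg _) (Real.exp_nonneg _)]
        congr 1; ring

/-- Hoeffding-plus-union-bound step in the proof of Theorem 1 of Noroozi–Rimal–Pensky: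
uniformly over all `K` and all assignments `Z`, the inner product of the Bernoulli noise
with a fixed unit-Frobenius-norm matrix `H K Z` is controlled. -/
theorem bernoulli_inner_product_uniform_bound
    (n : ℕ) (Ω : Type) [MeasurableSpace Ω] (μ : Measure Ω) [IsProbabilityMeasure μ]
    (P : Matrix (Fin n) (Fin n) ℝ) (hP : ∀ i j, P i j ∈ Set.Icc (0 : ℝ) 1)
    (A : Ω → Matrix (Fin n) (Fin n) ℝ) (hA : IsBernoulliMatrix μ P A)
    (H : (K : ℕ) → (Fin n → Fin K) → Matrix (Fin n) (Fin n) ℝ)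
    (hH : ∀ (K : ℕ) (Z : Fin n → Fin K), frobSq (H K Z) = 1) :
    ∀ t : ℝ, 0 < t →
      ENNReal.ofReal (1 - 2 * Real.exp (-t)) ≤
        μ {ω | ∀ K : ℕ, 1 ≤ K → K ≤ n → ∀ Z : Fin n → Fin K,
          Matrix.trace ((A ω - P)ᵀ * H K Z) ^ 2 ≤
            2 * Real.log n + 2 * n * Real.log K + 2 * t} := by
  intro t ht
  obtain ⟨hAm, hA01, hAμ, hInd⟩ := hA
  set E := {ω | ∀ K : ℕ, 1 ≤ K → K ≤ n → ∀ Z : Fin n → Fin K,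
      Matrix.trace ((A ω - P)ᵀ * H K Z) ^ 2 ≤
        2 * Real.log n + 2 * n * Real.log K + 2 * t} with hE
  rcases Nat.eq_zero_or_pos n with hn | hn
  · have hEuniv : E = Set.univ := by
      ext ω
      simp only [hE, Set.mem_setOf_eq, Set.mem_univ, iff_true]
      intro K hK1 hK2
      omega
    rw [hEuniv, measure_univ]
    exact ENNReal.ofReal_le_one.2 (by nlinarith [Real.exp_pos (-t)])
  -- n ≥ 1
  have hn1 : (1 : ℝ) ≤ (n : ℝ) := by exact_mod_cast hn
  set b : ℕ → ℝ := fun K => 2 * Real.log n + 2 * n * Real.log K + 2 * t with hbdef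
  have hb : ∀ K : ℕ, 1 ≤ K → 0 ≤ b K := by
    intro K hK
    have h1 : (0 : ℝ) ≤ Real.log n := Real.log_nonneg hn1
    have h2 : (0 : ℝ) ≤ Real.log K := Real.log_nonneg (by exact_mod_cast hK)
    have h3 : (0 : ℝ) ≤ (n : ℝ) := by positivity
    simp only [hbdef]
    nlinarith
  have hexpb : ∀ K : ℕ, 1 ≤ K → K ≤ n →
      Real.exp (-(b K) / 2) = Real.exp (-t) / ((n : ℝ) * (K : ℝ) ^ n) := by
    intro K hK1 hK2
    have hKpos : (0 : ℝ) < (K : ℝ) ^ n := by positivity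
    have hnpos : (0 : ℝ) < (n : ℝ) := by positivity
    have h1 : -(b K) / 2 = -(Real.log n + Real.log ((K : ℝ) ^ n) + t) := by
      rw [Real.log_pow]
      simp only [hbdef]
      push_cast
      ring
    rw [h1, Real.exp_neg, Real.exp_add, Real.exp_add, Real.exp_log hnpos,
      Real.exp_log hKpos, Real.exp_neg]
    field_simp
  -- tail bound for each (K, Z)
  have hpair : ∀ (K : ℕ), 1 ≤ K → K ≤ n → ∀ Z : Fin n → Fin K,
      μ {ω | ¬ Matrix.trace ((A ω - P)ᵀ * H K Z) ^ 2 ≤ b K}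
        ≤ ENNReal.ofReal (2 * Real.exp (-t) / ((n : ℝ) * (K : ℝ) ^ n)) := by
    intro K hK1 hK2 Z
    have hfrob : (∑ i, ∑ j, H K Z i j ^ 2) = 1 := by
      have := hH K Z; rwa [frobSq] at this
    have htail := aux_pair_tail μ P hP A hAm hA01 hAμ hInd (H K Z) hfrob
      (Real.sqrt (b K)) (Real.sqrt_nonneg _)
    rw [Real.sq_sqrt (hb K hK1)] at htail
    refine htail.trans (le_of_eq ?_)
    congr 1
    rw [hexpb K hK1 hK2]
    ring
  -- union bound
  have hbound : μ Eᶜ ≤ ENNReal.ofReal (2 * Real.exp (-t)) := by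
    have h1 : μ Eᶜ ≤ ∑ K ∈ Finset.Icc 1 n,
        μ (⋃ Z : Fin n → Fin K,
          {ω | ¬ Matrix.trace ((A ω - P)ᵀ * H K Z) ^ 2 ≤ b K}) := by
      refine (measure_mono ?_).trans (measure_biUnion_finset_le _ _)
      intro ω hω
      simp only [hE, Set.mem_compl_iff, Set.mem_setOf_eq] at hω
      push_neg at hω
      obtain ⟨K, hK1, hK2, Z, hZ⟩ := hω
      exact Set.mem_biUnion (Finset.mem_Icc.2 ⟨hK1, hK2⟩)
        (Set.mem_iUnion.2 ⟨Z, by simpa [hbdef] using hZ⟩)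
    refine h1.trans ?_
    have h2 : ∀ K ∈ Finset.Icc 1 n,
        μ (⋃ Z : Fin n → Fin K,
          {ω | ¬ Matrix.trace ((A ω - P)ᵀ * H K Z) ^ 2 ≤ b K})
          ≤ ENNReal.ofReal (2 * Real.exp (-t) / (n : ℝ)) := by
      intro K hK
      obtain ⟨hK1, hK2⟩ := Finset.mem_Icc.1 hK
      have hKpos : (0 : ℝ) < (K : ℝ) ^ n := by positivity
      have hnpos : (0 : ℝ) < (n : ℝ) := by positivity
      calc μ (⋃ Z : Fin n → Fin K,
            {ω | ¬ Matrix.trace ((A ω - P)ᵀ * H K Z) ^ 2 ≤ b K})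
          ≤ ∑ Z : Fin n → Fin K,
            μ {ω | ¬ Matrix.trace ((A ω - P)ᵀ * H K Z) ^ 2 ≤ b K} :=
            measure_iUnion_fintype_le _ _
        _ ≤ ∑ _Z : Fin n → Fin K,
            ENNReal.ofReal (2 * Real.exp (-t) / ((n : ℝ) * (K : ℝ) ^ n)) :=
            Finset.sum_le_sum (fun Z _ => hpair K hK1 hK2 Z)
        _ = (K ^ n : ℕ) • ENNReal.ofReal (2 * Real.exp (-t) / ((n : ℝ) * (K : ℝ) ^ n)) := by
            rw [Finset.sum_const, Finset.card_univ, Fintype.card_fun]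
            simp
        _ = ENNReal.ofReal (2 * Real.exp (-t) / (n : ℝ)) := by
            rw [nsmul_eq_mul, ← ENNReal.ofReal_natCast, ← ENNReal.ofReal_mul (by positivity)]
            congr 1
            field_simp
            ring
            norm_num
    calc ∑ K ∈ Finset.Icc 1 n,
          μ (⋃ Z : Fin n → Fin K,
            {ω | ¬ Matrix.trace ((A ω - P)ᵀ * H K Z) ^ 2 ≤ b K})
        ≤ ∑ _K ∈ Finset.Icc 1 n, ENNReal.ofReal (2 * Real.exp (-t) / (n : ℝ)) :=
          Finset.sum_le_sum h2
      _ = n • ENNReal.ofReal (2 * Real.exp (-t) / (n : ℝ)) := by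
          rw [Finset.sum_const, Nat.card_Icc]
          norm_num
      _ = ENNReal.ofReal (2 * Real.exp (-t)) := by
          rw [nsmul_eq_mul, ← ENNReal.ofReal_natCast, ← ENNReal.ofReal_mul (by positivity)]
          congr 1
          field_simp
  rcases le_or_gt (1 - 2 * Real.exp (-t)) 0 with h0 | h0
  · rw [ENNReal.ofReal_of_nonpos h0]
    exact zero_le
  · calc ENNReal.ofReal (1 - 2 * Real.exp (-t))
        = 1 - ENNReal.ofReal (2 * Real.exp (-t)) := by
          rw [ENNReal.ofReal_sub _ (by positivity), ENNReal.ofReal_one]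
      _ ≤ 1 - μ Eᶜ := tsub_le_tsub_left hbound 1
      _ ≤ μ E := by
          rw [tsub_le_iff_right]
          calc (1 : ENNReal) = μ Set.univ := measure_univ.symm
            _ = μ (E ∪ Eᶜ) := by rw [Set.union_compl_self]
            _ ≤ μ E + μ Eᶜ := measure_union_le _ _
end

section
/- Let m_1, m_2 ≥ 1 and let A, B, R be real scalars. Let X be the symmetric (m_1+m_2)×(m_1+m_2) matrix with blocks A·1_{m_1}·1_{m_1}^T and B·1_{m_2}·1_{m_2}^T on the main diagonal and off-diagonal blocks R·1_{m_1}·1_{m_2}^T and R·1_{m_2}·1_{m_1}^T. Set S = A·m_1 + B·m_2 and D = m_1·m_2·(A·B − R²). Then for every real λ, det(X − λ·I) = (−1)^{m_1+m_2}·λ^{m_1+m_2−2}·(λ² − S·λ + D); consequently the only possibly nonzero eigenvalues of X are λ_{1,2} = S/2 ± (1/2)·√(S² − 4·D). Moreover, if S > 0, D ≥ 0 and 0 < α < 1, then λ_2 − α·λ_1 ≥ (D − α·S²)/S, where λ_1 ≥ λ_2 are these two eigenvalues. -/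
open MeasureTheory Matrix ProbabilityTheory

/-- Lemma 12 of Noroozi–Rimal–Pensky: nonzero eigenvalues of a two-by-two block
constant matrix, and the lower bound `λ₂ − α·λ₁ ≥ (D − α·S²)/S`. -/
theorem block_constant_matrix_eigenvalues (m1 m2 : ℕ) (hm1 : 1 ≤ m1) (hm2 : 1 ≤ m2)
    (A B R : ℝ)
    (X : Matrix (Fin m1 ⊕ Fin m2) (Fin m1 ⊕ Fin m2) ℝ)
    (hX : X = Matrix.fromBlocks (Matrix.of fun _ _ => A) (Matrix.of fun _ _ => R)
        (Matrix.of fun _ _ => R) (Matrix.of fun _ _ => B))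
    (S D : ℝ) (hS : S = A * m1 + B * m2) (hD : D = m1 * m2 * (A * B - R ^ 2)) :
    (∀ lam : ℝ, Matrix.det (X - lam • 1) =
        (-1) ^ (m1 + m2) * lam ^ (m1 + m2 - 2) * (lam ^ 2 - S * lam + D)) ∧
    (∀ lam : ℝ, lam ≠ 0 → Matrix.det (X - lam • 1) = 0 →
        lam = S / 2 + Real.sqrt (S ^ 2 - 4 * D) / 2 ∨
        lam = S / 2 - Real.sqrt (S ^ 2 - 4 * D) / 2) ∧
    (0 < S → 0 ≤ D → ∀ α : ℝ, 0 < α → α < 1 →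
        (D - α * S ^ 2) / S ≤
          (S / 2 - Real.sqrt (S ^ 2 - 4 * D) / 2) -
            α * (S / 2 + Real.sqrt (S ^ 2 - 4 * D) / 2)) := by
  have key : ∀ lam : ℝ, lam ≠ 0 → Matrix.det (X - lam • 1) =
      (-1) ^ (m1 + m2) * lam ^ (m1 + m2 - 2) * (lam ^ 2 - S * lam + D) := by
    intro lam hlam
    set U : Matrix (Fin m1 ⊕ Fin m2) (Fin 2) ℝ :=
      Matrix.of fun i k => if k = 0 then (Sum.elim (fun _ => (1:ℝ)) (fun _ => 0) i)
        else (Sum.elim (fun _ => (0:ℝ)) (fun _ => 1) i) with hU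
    set V : Matrix (Fin 2) (Fin m1 ⊕ Fin m2) ℝ :=
      Matrix.of fun k j => if k = 0 then Sum.elim (fun _ => A) (fun _ => R) j
        else Sum.elim (fun _ => R) (fun _ => B) j with hV
    have hUV : X = U * V := by
      rw [hX]
      ext i j
      rcases i with i | i <;> rcases j with j | j <;>
        simp [hU, hV, Matrix.mul_apply, Fin.sum_univ_two]
    have hc : X - lam • 1 = (-lam) • (1 + U * ((-lam⁻¹) • V)) := by
      rw [hUV]
      rw [Matrix.mul_smul, smul_add, smul_smul]
      rw [show -lam * -lam⁻¹ = 1 by field_simp]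
      module
    rw [hc, Matrix.det_smul, Matrix.det_one_add_mul_comm]
    have hcard : Fintype.card (Fin m1 ⊕ Fin m2) = m1 + m2 := by simp
    rw [hcard]
    have h2 : ((-lam⁻¹) • V) * U = Matrix.of ![![(-lam⁻¹) * (A * m1), (-lam⁻¹) * (R * m2)],
        ![(-lam⁻¹) * (R * m1), (-lam⁻¹) * (B * m2)]] := by
      ext k j
      fin_cases k <;> fin_cases j <;>
        simp [hU, hV, Matrix.mul_apply, Fintype.sum_sum_type, mul_comm] <;> ring
    rw [h2]
    rw [show (1 : Matrix (Fin 2) (Fin 2) ℝ) + _ = Matrix.of ![![1 + (-lam⁻¹) * (A * m1), (-lam⁻¹) * (R * m2)],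
        ![(-lam⁻¹) * (R * m1), 1 + (-lam⁻¹) * (B * m2)]] by
      ext k j; fin_cases k <;> fin_cases j <;> simp [Matrix.one_apply]]
    rw [Matrix.det_fin_two]
    rw [hS, hD]
    obtain ⟨k, hk⟩ : ∃ k, m1 + m2 = k + 2 := ⟨m1 + m2 - 2, by omega⟩
    rw [hk, show k + 2 - 2 = k from by omega]
    simp only [Matrix.of_apply, Matrix.cons_val', Matrix.cons_val_zero, Matrix.cons_val_one,
      Matrix.head_cons, Matrix.head_fin_const, Matrix.empty_val', Matrix.cons_val_fin_one]
    field_simp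
    ring
  have part1 : ∀ lam : ℝ, Matrix.det (X - lam • 1) =
      (-1) ^ (m1 + m2) * lam ^ (m1 + m2 - 2) * (lam ^ 2 - S * lam + D) := by
    have hc1 : Continuous fun lam : ℝ => Matrix.det (X - lam • (1 : Matrix (Fin m1 ⊕ Fin m2) (Fin m1 ⊕ Fin m2) ℝ)) := by
      apply Continuous.matrix_det
      exact continuous_const.sub (continuous_id.smul continuous_const)
    have hc2 : Continuous fun lam : ℝ =>
        (-1 : ℝ) ^ (m1 + m2) * lam ^ (m1 + m2 - 2) * (lam ^ 2 - S * lam + D) := by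
      fun_prop
    have hdense : Dense {lam : ℝ | lam ≠ 0} := dense_compl_singleton 0
    have := hc1.ext_on hdense hc2 (fun lam hlam => key lam hlam)
    exact fun lam => congrFun this lam
  have hdisc : 0 ≤ S ^ 2 - 4 * D := by
    have h1 : (1:ℝ) ≤ m1 := by exact_mod_cast hm1
    have h2 : (1:ℝ) ≤ m2 := by exact_mod_cast hm2
    rw [hS, hD]
    nlinarith [sq_nonneg (A * (m1:ℝ) - B * m2), mul_nonneg (mul_nonneg (by linarith : (0:ℝ) ≤ m1) (by linarith : (0:ℝ) ≤ m2)) (sq_nonneg R)]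
  have hr : Real.sqrt (S ^ 2 - 4 * D) ^ 2 = S ^ 2 - 4 * D := Real.sq_sqrt hdisc
  have hr0 : 0 ≤ Real.sqrt (S ^ 2 - 4 * D) := Real.sqrt_nonneg _
  refine ⟨part1, ?_, ?_⟩
  · intro lam hlam hdet
    rw [part1 lam] at hdet
    have hne : ((-1 : ℝ) ^ (m1 + m2) * lam ^ (m1 + m2 - 2)) ≠ 0 := by
      apply mul_ne_zero (pow_ne_zero _ (by norm_num)) (pow_ne_zero _ hlam)
    have hquad : lam ^ 2 - S * lam + D = 0 := by
      rcases mul_eq_zero.1 hdet with h | h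
      · exact absurd h hne
      · exact h
    have hsq : (2 * lam - S) ^ 2 = Real.sqrt (S ^ 2 - 4 * D) ^ 2 := by
      rw [hr]; nlinarith [hquad]
    rcases sq_eq_sq_iff_eq_or_eq_neg.1 hsq with h | h
    · left; linarith
    · right; linarith
  · intro hSpos hDnn α hα0 hα1
    set r := Real.sqrt (S ^ 2 - 4 * D) with hrdef
    have hrS : r ≤ S := by
      nlinarith [hr, hr0]
    rw [div_le_iff₀ hSpos]
    nlinarith [hr, hr0, mul_le_mul_of_nonneg_left hrS hα0.le,
      mul_le_mul_of_nonneg_left (show S + r ≤ 2 * S by linarith) (show 0 ≤ S - r by linarith)]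
end
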